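/- In the domain of positive integers, all solutions of the equation x² − 5y² = −1 are given by x + y√5 = (2 + √5)^(2k+1) where k ranges over the non-negative integers; that is, a pair (x, y) of positive integers satisfies x² − 5y² = −1 if and only if there exists a non-negative integer k with x + y√5 = (2 + √5)^(2k+1). -/

import Mathlib

/-- Descent lemma: every positive solution of `x² - 5y² = -1` in `ℤ√5` is an odd
power of `⟨2, 1⟩`. -/
lemma pell5_descent : ∀ n : ℕ, ∀ x y : ℤ, 0 < x → 0 < y → y ≤ (n : ℤ) →
    x ^ 2 - 5 * y ^ 2 = -1 →
    ∃ k : ℕ, (⟨x, y⟩ : ℤ√5) = (⟨2, 1⟩ : ℤ√5) ^ (2 * k + 1) := by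
  intro n
  induction n with
  | zero => intro x y hx hy hyn h; omega
  | succ n ih =>
    intro x y hx hy hyn h
    by_cases h4 : y ≤ 4
    · interval_cases y
      · -- y = 1, so x = 2
        have h2 : (x - 2) * (x + 2) = 0 := by linear_combination h
        rcases mul_eq_zero.mp h2 with h2 | h2
        · refine ⟨0, ?_⟩
          have : x = 2 := by omega
          subst this
          norm_num
        · omega
      · exfalso
        have hx5 : x ≤ 5 := by nlinarith
        interval_cases x <;> omega
      · exfalso
        have hx7 : x ≤ 7 := by nlinarith
        interval_cases x <;> omega
      · exfalso
        have hx9 : x ≤ 9 := by nlinarith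
        interval_cases x <;> omega
    · push_neg at h4
      set x' : ℤ := 9 * x - 20 * y with hx'def
      set y' : ℤ := 9 * y - 4 * x with hy'def
      have hx' : 0 < x' := by nlinarith
      have hy' : 0 < y' := by nlinarith
      have hlt : y' < y := by nlinarith
      have h' : x' ^ 2 - 5 * y' ^ 2 = -1 := by
        rw [hx'def, hy'def]; linear_combination h
      obtain ⟨k, hk⟩ := ih x' y' hx' hy' (by omega) h'
      refine ⟨k + 1, ?_⟩
      have hmul : (⟨x, y⟩ : ℤ√5) = (⟨x', y'⟩ : ℤ√5) * ⟨9, 4⟩ := by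
        rw [Zsqrtd.ext_iff]
        simp only [Zsqrtd.re_mul, Zsqrtd.im_mul]
        constructor <;> omega
      have hz2 : (⟨2, 1⟩ : ℤ√5) * ⟨2, 1⟩ = (⟨9, 4⟩ : ℤ√5) := by
        rw [Zsqrtd.ext_iff]
        simp [Zsqrtd.re_mul, Zsqrtd.im_mul]
      rw [hmul, hk, ← hz2]
      ring

lemma pell5_not_square : ∀ m : ℤ, (5 : ℤ) ≠ m * m := by
  intro m hm
  have h1 : m ≤ 2 := by nlinarith
  have h2 : -2 ≤ m := by nlinarith
  interval_cases m <;> omega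

/-- In the domain of positive integers, all solutions of `x² - 5y² = -1` are given by
`x + y√5 = (2 + √5)^(2k+1)` where `k` ranges over the non-negative integers. -/
theorem pell_neg_five_solutions (x y : ℤ) (hx : 0 < x) (hy : 0 < y) :
    x ^ 2 - 5 * y ^ 2 = -1 ↔
      ∃ k : ℕ, (x : ℝ) + (y : ℝ) * Real.sqrt 5 = (2 + Real.sqrt 5) ^ (2 * k + 1) := by
  have h5 : (0 : ℤ) ≤ 5 := by norm_num
  have htR : ∀ a : ℤ√5, Zsqrtd.toReal h5 a = (a.re : ℝ) + (a.im : ℝ) * Real.sqrt 5 := by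
    intro a; simp [Zsqrtd.toReal_apply]
  have hz : Zsqrtd.toReal h5 (⟨2, 1⟩ : ℤ√5) = 2 + Real.sqrt 5 := by
    rw [htR]; norm_num
  constructor
  · intro h
    obtain ⟨k, hk⟩ := pell5_descent y.toNat x y hx hy (by omega) h
    refine ⟨k, ?_⟩
    have := congrArg (Zsqrtd.toReal h5) hk
    rwa [map_pow, hz, htR] at this
  · rintro ⟨k, hk⟩
    have hinj := Zsqrtd.toReal_injective h5 pell5_not_square
    have heq : Zsqrtd.toReal h5 (⟨x, y⟩ : ℤ√5) =
        Zsqrtd.toReal h5 ((⟨2, 1⟩ : ℤ√5) ^ (2 * k + 1)) := by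
      rw [map_pow, hz, htR, hk]
    have hxy : (⟨x, y⟩ : ℤ√5) = (⟨2, 1⟩ : ℤ√5) ^ (2 * k + 1) := hinj heq
    have hnorm : Zsqrtd.norm (⟨x, y⟩ : ℤ√5) =
        (Zsqrtd.norm (⟨2, 1⟩ : ℤ√5)) ^ (2 * k + 1) := by
      rw [hxy]
      exact map_pow (Zsqrtd.normMonoidHom) _ _
    have hz1 : Zsqrtd.norm (⟨2, 1⟩ : ℤ√5) = -1 := by
      simp [Zsqrtd.norm_def]
    rw [hz1, Odd.neg_one_pow ⟨k, by ring⟩] at hnorm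
    rw [Zsqrtd.norm_def] at hnorm
    simp only at hnorm
    nlinarith [hnorm]
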